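/- (Dedekind reciprocity law) For coprime positive integers p and q, s(p,q) + s(q,p) = χ(p,q), i.e. s(p,q) + s(q,p) = (1/12)·(p/q + q/p + 1/(p·q)) − 1/4. -/

import Mathlib

/-- The sawtooth function `((x)) = x − ⌊x⌋ − 1/2` if `x ∉ ℤ`, and `0` if `x ∈ ℤ`. -/
def sawtooth (x : ℚ) : ℚ :=
  if (⌊x⌋ : ℚ) = x then 0 else x - ⌊x⌋ - 1 / 2

/-- The Dedekind sum `s(p,q) = Σ_{i=0}^{q−1} ((p·i/q))·((i/q))`. -/
def dedekindSum (p : ℤ) (q : ℕ) : ℚ :=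
  ∑ i ∈ Finset.range q, sawtooth ((p : ℚ) * i / q) * sawtooth ((i : ℚ) / q)

open Finset

private lemma sumId (n : ℕ) : ∑ i ∈ range n, (i:ℚ) = n*(n-1)/2 := by
  induction n with
  | zero => simp
  | succ k ih => rw [Finset.sum_range_succ, ih]; push_cast; ring

private lemma sumSq (n : ℕ) : ∑ i ∈ range n, (i:ℚ)^2 = n*(n-1)*(2*n-1)/6 := by
  induction n with
  | zero => simp
  | succ k ih => rw [Finset.sum_range_succ, ih]; push_cast; ring

private lemma inv_aux {p p' q : ℕ} (hpp' : p * p' % q = 1 % q) {a : ℕ} (ha : a < q) :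
    p' * (p * a % q) % q = a := by
  have h1 : p' * (p * a % q) ≡ p' * (p * a) [MOD q] := (Nat.mod_modEq (p*a) q).mul_left p'
  have h2 : p' * (p * a) = (p * p') * a := by ring
  have h3 : (p * p') * a ≡ 1 * a [MOD q] := Nat.ModEq.mul_right a hpp'
  have h4 : p' * (p * a % q) ≡ a [MOD q] := by
    calc p' * (p * a % q) ≡ p' * (p * a) [MOD q] := h1
    _ = (p * p') * a := h2
    _ ≡ 1 * a [MOD q] := h3
    _ = a := one_mul a
  calc p' * (p * a % q) % q = a % q := h4
  _ = a := Nat.mod_eq_of_lt ha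

private lemma perm_sum (p q : ℕ) (hq : 0 < q) (h : Nat.Coprime p q) (f : ℕ → ℚ) :
    ∑ i ∈ range q, f (p * i % q) = ∑ i ∈ range q, f i := by
  obtain ⟨p', hp'⟩ : ∃ p', p * p' % q = 1 % q := by
    rcases Nat.lt_or_ge 1 q with h2 | h2
    · obtain ⟨m, -, hm⟩ := Nat.exists_mul_mod_eq_one_of_coprime h h2
      exact ⟨m, by rw [hm, Nat.mod_eq_of_lt h2]⟩
    · interval_cases q
      exact ⟨0, by simp⟩
  have hp'2 : p' * p % q = 1 % q := by rwa [mul_comm]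
  refine Finset.sum_nbij' (fun a => p * a % q) (fun b => p' * b % q) ?_ ?_ ?_ ?_ ?_
  · intro a _; exact mem_range.mpr (Nat.mod_lt _ hq)
  · intro a _; exact mem_range.mpr (Nat.mod_lt _ hq)
  · intro a ha; exact inv_aux hp' (mem_range.mp ha)
  · intro b hb; exact inv_aux hp'2 (mem_range.mp hb)
  · intro a _; rfl

private lemma saw_zero : sawtooth 0 = 0 := by simp [sawtooth]

private lemma saw_simple {i q : ℕ} (hi : 0 < i) (hiq : i < q) :
    sawtooth ((i:ℚ)/q) = (i:ℚ)/q - 1/2 := by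
  have hq : 0 < q := hi.trans hiq
  have hfl : ⌊(i:ℚ)/q⌋ = 0 := by
    rw [show ((i:ℕ):ℚ) = ((i:ℤ):ℚ) by push_cast; ring, Rat.floor_intCast_div_natCast]
    exact Int.ediv_eq_zero_of_lt (by positivity) (by exact_mod_cast hiq)
  have hpos : 0 < (i:ℚ)/q := by positivity
  rw [sawtooth, hfl, if_neg (by push_cast; linarith)]
  push_cast; ring

private lemma saw_mul {p i q : ℕ} (h : Nat.Coprime p q) (hi : 0 < i) (hiq : i < q) :
    sawtooth ((p:ℚ)*i/q) = ((p*i % q : ℕ):ℚ)/q - 1/2 := by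
  have hq : 0 < q := hi.trans hiq
  have hq0 : (q:ℚ) ≠ 0 := Nat.cast_ne_zero.mpr hq.ne'
  have hcast : (p:ℚ)*(i:ℚ) = ((p*i:ℕ):ℚ) := by push_cast; ring
  have hfl : ⌊(p:ℚ)*i/q⌋ = ((p*i/q : ℕ) : ℤ) := by
    rw [hcast, show ((p*i:ℕ):ℚ) = (((p*i:ℕ):ℤ):ℚ) by push_cast; ring,
      Rat.floor_intCast_div_natCast]
    exact_mod_cast Int.natCast_div (p*i) q |>.symm
  have hndvd : ¬ (q ∣ p * i) := by
    intro hdvd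
    have : q ∣ i := (Nat.Coprime.dvd_of_dvd_mul_left h.symm) hdvd
    exact absurd (Nat.le_of_dvd hi this) (not_le.mpr hiq)
  have hmod : p * i % q ≠ 0 := fun hc => hndvd (Nat.dvd_of_mod_eq_zero hc)
  have hdm : (q:ℚ) * ((p*i/q : ℕ):ℚ) + ((p*i%q : ℕ):ℚ) = ((p*i:ℕ):ℚ) := by
    exact_mod_cast congrArg (Nat.cast : ℕ → ℚ) (Nat.div_add_mod (p*i) q)
  have hR : ((p*i%q : ℕ):ℚ) ≠ 0 := Nat.cast_ne_zero.mpr hmod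
  rw [sawtooth, hfl, Int.cast_natCast,
    show (p:ℚ)*i/q = ((p*i:ℕ):ℚ)/q by rw [hcast]]
  rw [if_neg]
  · field_simp
    linarith
  · intro hc
    apply hR
    have h2 : ((p*i/q : ℕ):ℚ) * q = ((p*i:ℕ):ℚ) := by
      rw [hc, div_mul_cancel₀ _ hq0]
    linarith

private lemma ded_eq (p q : ℕ) (hq : 0 < q) (h : Nat.Coprime p q) :
    dedekindSum p q =
      (∑ i ∈ range q, (i:ℚ) * ((p*i % q : ℕ):ℚ))/(q:ℚ)^2 - ((q:ℚ)-1)/4 := by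
  have hq0 : (q:ℚ) ≠ 0 := Nat.cast_ne_zero.mpr hq.ne'
  set F : ℕ → ℚ := fun i => (((p*i % q : ℕ):ℚ)/q - 1/2) * ((i:ℚ)/q - 1/2) with hF
  have step1 : dedekindSum p q = (∑ i ∈ range q, F i) - 1/4 := by
    have hsub : ∑ i ∈ range q,
        (sawtooth (((p:ℤ):ℚ) * i / q) * sawtooth ((i:ℚ)/q) - F i) = -(1/4) := by
      rw [Finset.sum_eq_single 0]
      · simp [hF, saw_zero]; norm_num
      · intro i hi hi0
        have hi1 : 0 < i := Nat.pos_of_ne_zero hi0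
        have hi2 : i < q := mem_range.mp hi
        rw [show ((p:ℤ):ℚ) = (p:ℚ) by push_cast; ring, saw_mul h hi1 hi2,
          saw_simple hi1 hi2, hF]
        ring
      · intro hc; exact absurd (mem_range.mpr hq) hc
    rw [Finset.sum_sub_distrib] at hsub
    unfold dedekindSum
    linarith
  have expand : ∀ i ∈ range q, F i =
      (i:ℚ) * ((p*i % q : ℕ):ℚ)/q^2 - ((p*i % q : ℕ):ℚ)/(2*q) - (i:ℚ)/(2*q) + 1/4 := by
    intro i _
    rw [hF]
    field_simp
    ring
  rw [step1, Finset.sum_congr rfl expand]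
  have e1 : ∑ i ∈ range q, ((p*i % q : ℕ):ℚ) = (q:ℚ)*((q:ℚ)-1)/2 := by
    rw [perm_sum p q hq h (fun n => (n:ℚ)), sumId]
  have e2 : ∑ i ∈ range q, (i:ℚ) = (q:ℚ)*((q:ℚ)-1)/2 := sumId q
  rw [Finset.sum_add_distrib, Finset.sum_sub_distrib, Finset.sum_sub_distrib,
    ← Finset.sum_div, ← Finset.sum_div, ← Finset.sum_div, e1, e2,
    Finset.sum_const, card_range, nsmul_eq_mul]
  field_simp
  ring

private lemma card_eq {p q i : ℕ} (hp : 0 < p) (hq : 0 < q) (h : Nat.Coprime p q)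
    (hiq : i < q) :
    p * i / q = (filter (fun j => q*j < p*i) (Ico 1 p)).card := by
  rcases Nat.eq_zero_or_pos i with rfl | hi
  · simp
  have hiff : ∀ j, q*j < p*i ↔ j ≤ p*i/q := by
    intro j
    rw [Nat.le_div_iff_mul_le hq, mul_comm j q]
    constructor
    · omega
    · intro h1
      have h2 : q*j ≠ p*i := by
        intro hc
        have hd : q ∣ i := (Nat.Coprime.dvd_of_dvd_mul_left h.symm) ⟨j, hc.symm⟩
        have := Nat.le_of_dvd hi hd
        omega
      omega
  have heq : filter (fun j => q*j < p*i) (Ico 1 p) = Ico 1 (p*i/q + 1) := by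
    have hlt : p * i / q < p := (Nat.div_lt_iff_lt_mul hq).mpr
      (Nat.mul_lt_mul_of_le_of_lt (le_refl p) hiq hp)
    ext j
    simp only [mem_filter, mem_Ico, hiff]
    omega
  rw [heq, Nat.card_Ico]
  simp

private lemma filter2 {p q j : ℕ} (hp : 0 < p) :
    filter (fun i => q*j < p*i) (range q) = Ico (q*j/p + 1) q := by
  ext i
  simp only [mem_filter, mem_range, mem_Ico]
  have : q*j/p < i ↔ q*j < p*i := by rw [Nat.div_lt_iff_lt_mul hp, mul_comm i p]
  omega

private lemma T_eq (p q : ℕ) (hp : 0 < p) (hq : 0 < q) (h : Nat.Coprime p q) :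
    ∑ i ∈ range q, (i:ℚ) * ((p*i/q : ℕ):ℚ)
      = ∑ j ∈ Ico 1 p, ((q:ℚ)*((q:ℚ)-1)/2
          - ((q*j/p : ℕ):ℚ) * (((q*j/p : ℕ):ℚ) + 1)/2) := by
  calc ∑ i ∈ range q, (i:ℚ) * ((p*i/q : ℕ):ℚ)
      = ∑ i ∈ range q, ∑ j ∈ Ico 1 p, (if q*j < p*i then (i:ℚ) else 0) := by
        refine sum_congr rfl fun i hi => ?_
        rw [← Finset.sum_filter, Finset.sum_const, nsmul_eq_mul,
          ← card_eq hp hq h (mem_range.mp hi)]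
        ring
    _ = ∑ j ∈ Ico 1 p, ∑ i ∈ range q, (if q*j < p*i then (i:ℚ) else 0) :=
        Finset.sum_comm
    _ = _ := by
        refine sum_congr rfl fun j hj => ?_
        have hjp : j < p := (mem_Ico.mp hj).2
        have hmq : q*j/p + 1 ≤ q := by
          have : q*j/p < q := (Nat.div_lt_iff_lt_mul hp).mpr
            (Nat.mul_lt_mul_of_le_of_lt (le_refl q) hjp hq)
          omega
        rw [← Finset.sum_filter, filter2 hp,
          Finset.sum_Ico_eq_sub _ hmq, sumId, sumId]
        push_cast
        ring

/-- Dedekind's reciprocity law: for coprime positive integers `p` and `q`,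
`s(p,q) + s(q,p) = (1/12)·(p/q + q/p + 1/(p·q)) − 1/4`. -/
theorem dedekind_reciprocity (p q : ℕ) (hp : 0 < p) (hq : 0 < q)
    (hpq : Nat.Coprime p q) :
    dedekindSum p q + dedekindSum q p =
      (1 / 12) * ((p : ℚ) / q + (q : ℚ) / p + 1 / (p * q)) - 1 / 4 := by
  have hq0 : (q:ℚ) ≠ 0 := Nat.cast_ne_zero.mpr hq.ne'
  have hp0 : (p:ℚ) ≠ 0 := Nat.cast_ne_zero.mpr hp.ne'
  rw [ded_eq p q hq hpq, ded_eq q p hp hpq.symm]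
  set Wqp := ∑ j ∈ range p, (j:ℚ) * ((q*j % p : ℕ):ℚ) with hWqp
  -- Step 1: express Wpq in terms of T := ∑ i * (p*i/q)
  have hW : ∑ i ∈ range q, (i:ℚ) * ((p*i % q : ℕ):ℚ)
      = (p:ℚ) * (∑ i ∈ range q, (i:ℚ)^2)
        - q * (∑ i ∈ range q, (i:ℚ) * ((p*i/q : ℕ):ℚ)) := by
    rw [Finset.mul_sum, Finset.mul_sum, ← Finset.sum_sub_distrib]
    refine sum_congr rfl fun i _ => ?_
    have hdm : (q:ℚ) * ((p*i/q : ℕ):ℚ) + ((p*i%q : ℕ):ℚ) = ((p*i:ℕ):ℚ) := by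
      exact_mod_cast congrArg (Nat.cast : ℕ → ℚ) (Nat.div_add_mod (p*i) q)
    have hc : ((p*i:ℕ):ℚ) = (p:ℚ)*(i:ℚ) := by push_cast; ring
    rw [hc] at hdm
    nlinarith [hdm]
  -- Step 2: the swapped sum via T_eq, extended to range p
  have hT2 : ∑ j ∈ Ico 1 p, ((q:ℚ)*((q:ℚ)-1)/2
        - ((q*j/p : ℕ):ℚ) * (((q*j/p : ℕ):ℚ) + 1)/2)
      = ((p:ℚ)-1) * ((q:ℚ)*((q:ℚ)-1)/2)
        - (∑ j ∈ range p, ((q*j/p : ℕ):ℚ) * (((q*j/p : ℕ):ℚ) + 1)/2) := by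
    rw [Finset.sum_sub_distrib, Finset.sum_const, Nat.card_Ico, nsmul_eq_mul]
    have hcard : ((p - 1 : ℕ):ℚ) = (p:ℚ) - 1 := by
      rw [Nat.cast_sub hp]; norm_num
    rw [hcard]
    congr 1
    rw [Finset.range_eq_Ico,
      show Ico 0 p = insert 0 (Ico 1 p) by ext x; simp only [mem_Ico, mem_insert]; omega,
      Finset.sum_insert (by simp)]
    simp
  -- Step 3: express M := ∑ m(m+1)/2 in terms of Wqp
  have hM : ∑ j ∈ range p, ((q*j/p : ℕ):ℚ) * (((q*j/p : ℕ):ℚ) + 1)/2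
      = ((q:ℚ)^2*((p:ℚ)*((p:ℚ)-1)*(2*(p:ℚ)-1)/6) - 2*q*Wqp
          + ((p:ℚ)*((p:ℚ)-1)*(2*(p:ℚ)-1)/6)
          + (p:ℚ)*q*((p:ℚ)*((p:ℚ)-1)/2) - (p:ℚ)*((p:ℚ)*((p:ℚ)-1)/2)) / (2*(p:ℚ)^2) := by
    have key : ∀ j ∈ range p, ((q*j/p : ℕ):ℚ) * (((q*j/p : ℕ):ℚ) + 1)/2
        = ((q:ℚ)^2*(j:ℚ)^2 - 2*(q:ℚ)*((j:ℚ)*((q*j%p : ℕ):ℚ)) + ((q*j%p : ℕ):ℚ)^2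
            + (p:ℚ)*(q:ℚ)*(j:ℚ) - (p:ℚ)*((q*j%p : ℕ):ℚ)) / (2*(p:ℚ)^2) := by
      intro j _
      have hdm : (p:ℚ) * ((q*j/p : ℕ):ℚ) + ((q*j%p : ℕ):ℚ) = ((q*j:ℕ):ℚ) := by
        exact_mod_cast congrArg (Nat.cast : ℕ → ℚ) (Nat.div_add_mod (q*j) p)
      have hc : ((q*j:ℕ):ℚ) = (q:ℚ)*(j:ℚ) := by push_cast; ring
      rw [hc] at hdm
      have hm : ((q*j/p : ℕ):ℚ) = ((q:ℚ)*(j:ℚ) - ((q*j%p : ℕ):ℚ))/(p:ℚ) := by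
        field_simp
        linarith
      rw [hm]
      field_simp
      ring
    rw [Finset.sum_congr rfl key, ← Finset.sum_div]
    congr 1
    rw [Finset.sum_sub_distrib, Finset.sum_add_distrib, Finset.sum_add_distrib,
      Finset.sum_sub_distrib, ← Finset.mul_sum, ← Finset.mul_sum, ← Finset.mul_sum,
      ← Finset.mul_sum]
    have e1 : ∑ j ∈ range p, ((q*j%p : ℕ):ℚ)^2 = ∑ j ∈ range p, (j:ℚ)^2 :=
      perm_sum q p hp hpq.symm (fun n => (n:ℚ)^2)
    have e2 : ∑ j ∈ range p, ((q*j%p : ℕ):ℚ) = ∑ j ∈ range p, (j:ℚ) :=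
      perm_sum q p hp hpq.symm (fun n => (n:ℚ))
    have e3 : ∑ j ∈ range p, (j:ℚ)*((q*j%p : ℕ):ℚ) = Wqp := rfl
    rw [e1, e2, e3, sumSq, sumId]
  rw [hW, T_eq p q hp hq hpq, hT2, hM, sumSq]
  field_simp
  ring
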